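/- The tensor-reverse operator J^q on the q-deformed Fock space, defined by J^q(ξ_1⊗…⊗ξ_k) = ξ_k⊗…⊗ξ_1, is a unitary operator (with respect to the q-inner product), and J^q L_i^q J^q = R_i^q for each i. -/

import Mathlib

open Finset

/-- The algebraic q-deformed Fock space over `ℂ^n`. -/
abbrev FockSpace (n : ℕ) := List (Fin n) →₀ ℂ

/-- The number of inversions of a permutation of `Fin k`. -/
def invCount {k : ℕ} (σ : Equiv.Perm (Fin k)) : ℕ :=
  ((Finset.univ : Finset (Fin k × Fin k)).filter fun p => p.1 < p.2 ∧ σ p.2 < σ p.1).card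

/-- The q-inner product of two basis tensors (words): zero unless the lengths agree,
otherwise `Σ_σ q^{inv σ} Π_m ⟨e_{w(σ m)}, e_{v(m)}⟩`. -/
noncomputable def qbWord (q : ℝ) {n : ℕ} (w v : List (Fin n)) : ℂ :=
  if h : w.length = v.length then
    ∑ σ : Equiv.Perm (Fin w.length), (q : ℂ) ^ invCount σ *
      ∏ m : Fin w.length, (if w.get (σ m) = v.get (Fin.cast h m) then (1 : ℂ) else 0)
  else 0

/-- The q-inner product on the q-deformed Fock space, extended sesquilinearly. -/
noncomputable def qip (q : ℝ) {n : ℕ} (x y : FockSpace n) : ℂ :=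
  ∑ w ∈ x.support, ∑ v ∈ y.support, (starRingEnd ℂ) (x w) * y v * qbWord q w v

/-- The left creation operator `L_i^q : ξ ↦ e_i ⊗ ξ`. -/
noncomputable def creL (n : ℕ) (i : Fin n) : FockSpace n →ₗ[ℂ] FockSpace n :=
  Finsupp.lmapDomain ℂ ℂ (fun w : List (Fin n) => i :: w)

/-- The right creation operator `R_i^q : ξ ↦ ξ ⊗ e_i`. -/
noncomputable def creR (n : ℕ) (i : Fin n) : FockSpace n →ₗ[ℂ] FockSpace n :=
  Finsupp.lmapDomain ℂ ℂ (fun w : List (Fin n) => w ++ [i])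

/-- The tensor-reverse operator `J^q(ξ_1⊗…⊗ξ_k) = ξ_k⊗…⊗ξ_1`. -/
noncomputable def revJ (n : ℕ) : FockSpace n →ₗ[ℂ] FockSpace n :=
  Finsupp.lmapDomain ℂ ℂ (fun w : List (Fin n) => w.reverse)

lemma invCount_conj {k : ℕ} (σ τ : Equiv.Perm (Fin k))
    (hτ : ∀ x, τ x = Fin.rev (σ (Fin.rev x))) : invCount τ = invCount σ := by
  unfold invCount
  refine Finset.card_bij' (fun p _ => (Fin.rev p.2, Fin.rev p.1))
    (fun p _ => (Fin.rev p.2, Fin.rev p.1)) ?_ ?_ ?_ ?_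
  · rintro ⟨a, b⟩ hab
    simp only [Finset.mem_filter, Finset.mem_univ, true_and] at hab ⊢
    rw [hτ, hτ] at hab
    exact ⟨Fin.rev_lt_rev.mpr hab.1, by simpa [Fin.rev_lt_rev] using hab.2⟩
  · rintro ⟨a, b⟩ hab
    simp only [Finset.mem_filter, Finset.mem_univ, true_and] at hab ⊢
    rw [hτ, hτ]
    simp only [Fin.rev_rev]
    exact ⟨Fin.rev_lt_rev.mpr hab.1, Fin.rev_lt_rev.mpr hab.2⟩
  · rintro ⟨a, b⟩ _; simp [Fin.rev_rev]
  · rintro ⟨a, b⟩ _; simp [Fin.rev_rev]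

lemma invCount_congr {k k' : ℕ} (h : k = k') (σ : Equiv.Perm (Fin k)) :
    invCount ((finCongr h).permCongr σ) = invCount σ := by
  subst h
  have : (finCongr rfl).permCongr σ = σ := Equiv.ext fun x => by simp
  rw [this]

lemma get_reverse {n : ℕ} (w : List (Fin n)) (j : Fin w.reverse.length) :
    w.reverse.get j = w.get (Fin.rev (Fin.cast ((List.length_reverse : w.reverse.length = w.length)) j)) := by
  simp only [List.get_eq_getElem, List.getElem_reverse]
  congr 1
  simp [Fin.val_rev]
  omega

lemma qbWord_reverse (q : ℝ) {n : ℕ} (w v : List (Fin n)) :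
    qbWord q w.reverse v.reverse = qbWord q w v := by
  unfold qbWord
  by_cases h : w.length = v.length
  · have h' : w.reverse.length = v.reverse.length := by simp [h]
    rw [dif_pos h', dif_pos h]
    refine Fintype.sum_equiv
      (((finCongr ((List.length_reverse : w.reverse.length = w.length))).permCongr).trans (Fin.revPerm.permCongr)) _ _ ?_
    intro σ
    have hinv : invCount ((((finCongr ((List.length_reverse : w.reverse.length = w.length))).permCongr).trans
        (Fin.revPerm.permCongr)) σ) = invCount σ := by
      have step1 := invCount_conj ((finCongr ((List.length_reverse : w.reverse.length = w.length))).permCongr σ)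
        ((((finCongr ((List.length_reverse : w.reverse.length = w.length))).permCongr).trans (Fin.revPerm.permCongr)) σ)
        (fun x => by simp [Equiv.permCongr_apply, Equiv.Perm.inv_def, Fin.revPerm_symm, Fin.revPerm_apply, Fin.rev_rev])
      rw [step1, invCount_congr]
    rw [hinv]
    congr 1
    refine Fintype.prod_equiv ((finCongr ((List.length_reverse : w.reverse.length = w.length))).trans Fin.revPerm) _ _ ?_
    intro m
    have e1 : ((((finCongr ((List.length_reverse : w.reverse.length = w.length))).permCongr).trans (Fin.revPerm.permCongr)) σ)
        (((finCongr ((List.length_reverse : w.reverse.length = w.length))).trans Fin.revPerm) m)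
        = Fin.rev (Fin.cast ((List.length_reverse : w.reverse.length = w.length)) (σ m)) := by
      simp [Equiv.permCongr_apply, Equiv.Perm.inv_def, Fin.revPerm_symm, Fin.revPerm_apply, Fin.rev_rev]
    rw [e1, ← get_reverse w (σ m)]
    have e2 : v.get (Fin.cast h (((finCongr ((List.length_reverse : w.reverse.length = w.length))).trans Fin.revPerm) m))
        = v.reverse.get (Fin.cast h' m) := by
      rw [get_reverse v]
      congr 1
      ext
      simp [Fin.rev]
      omega
    rw [e2]
  · have h' : ¬ (w.reverse.length = v.reverse.length) := by simp [h]
    rw [dif_neg h', dif_neg h]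

theorem revJ_unitary_and_conjugates (n : ℕ) (q : ℝ) (hq : |q| < 1) :
    (∀ x y : FockSpace n, qip q (revJ n x) (revJ n y) = qip q x y) ∧
      revJ n ∘ₗ revJ n = LinearMap.id ∧
      ∀ i : Fin n, revJ n ∘ₗ creL n i ∘ₗ revJ n = creR n i := by
  have hrevinj : Function.Injective (fun w : List (Fin n) => w.reverse) :=
    fun a b hab => by simpa using congrArg List.reverse hab
  refine ⟨?_, ?_, ?_⟩
  · intro x y
    unfold qip revJ
    rw [Finsupp.lmapDomain_apply, Finsupp.lmapDomain_apply,
      Finsupp.mapDomain_support_of_injective hrevinj,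
      Finsupp.mapDomain_support_of_injective hrevinj]
    rw [Finset.sum_image (fun a _ b _ hab => hrevinj hab)]
    refine Finset.sum_congr rfl fun w _ => ?_
    rw [Finset.sum_image (fun a _ b _ hab => hrevinj hab)]
    refine Finset.sum_congr rfl fun v _ => ?_
    rw [Finsupp.mapDomain_apply hrevinj, Finsupp.mapDomain_apply hrevinj, qbWord_reverse]
  · refine Finsupp.lhom_ext fun w b => ?_
    simp [revJ, Finsupp.mapDomain_single]
  · intro i
    refine Finsupp.lhom_ext fun w b => ?_
    simp [revJ, creL, creR, Finsupp.mapDomain_single]
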